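/- Let a and b be coprime integers with 0 < a < b, β ∈ ℂ, and ε ∈ ℂ with ε ≠ 0. The ℂ-vector space {f ∈ ℂ[[t₁,x₂]] : P f = 0 and E_p f = 0} of formal power series solutions of the hypergeometric system at the point p = (ε,0) has dimension a. -/

import Mathlib

noncomputable section

abbrev M2 : Type := MvPowerSeries (Fin 2) ℂ

/-- Coefficient `f_{(i,j)}` of a formal power series `f ∈ ℂ[[x₁,x₂]]`. -/
def co (f : M2) (i j : ℕ) : ℂ :=
  MvPowerSeries.coeff (R := ℂ) (Finsupp.single (0 : Fin 2) i + Finsupp.single (1 : Fin 2) j) f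

/-- A coefficient family `F` is Gevrey of order `s` along `x₂ = 0`:
`|F i j| ≤ C·R^(i+j)·(j!)^(s-1)` for some `C, R > 0`. -/
def GevreyFn (s : ℝ) (F : ℕ → ℕ → ℂ) : Prop :=
  ∃ C R : ℝ, 0 < C ∧ 0 < R ∧
    ∀ i j : ℕ, ‖F i j‖ ≤ C * R ^ (i + j) * (j.factorial : ℝ) ^ (s - 1)

/-- A coefficient family is convergent iff it is Gevrey of order `1`, i.e.
`|F i j| ≤ C·R^(i+j)` for some `C, R > 0`. -/
def ConvFn (F : ℕ → ℕ → ℂ) : Prop := GevreyFn 1 F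

/-- Coefficients of `P f` where `P = ∂₁^b - ∂₂^a`:
`(P f)_{(i,j)} = ((i+b)!/i!)·f_{(i+b,j)} - ((j+a)!/j!)·f_{(i,j+a)}`. -/
def Pco (a b : ℕ) (f : M2) (i j : ℕ) : ℂ :=
  (((i + b).factorial / i.factorial : ℕ) : ℂ) * co f (i + b) j
    - (((j + a).factorial / j.factorial : ℕ) : ℂ) * co f i (j + a)

/-- Coefficients of `E f` where `E = a·x₁∂₁ + b·x₂∂₂ - β`:
`(E f)_{(i,j)} = (a·i + b·j - β)·f_{(i,j)}`. -/
def Eco (a b : ℕ) (β : ℂ) (f : M2) (i j : ℕ) : ℂ :=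
  (((a * i + b * j : ℕ) : ℂ) - β) * co f i j

/-- Coefficients of `E_p f` where `E_p = a·(t₁+ε)∂₁ + b·x₂∂₂ - β`:
`(E_p f)_{(i,j)} = (a·i + b·j - β)·f_{(i,j)} + a·ε·(i+1)·f_{(i+1,j)}`. -/
def Epco (a b : ℕ) (β ε : ℂ) (f : M2) (i j : ℕ) : ℂ :=
  (((a * i + b * j : ℕ) : ℂ) - β) * co f i j + (a : ℂ) * ε * ((i : ℂ) + 1) * co f (i + 1) j

lemma co_add (f g : M2) (i j : ℕ) : co (f + g) i j = co f i j + co g i j := by simp [co]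

lemma co_smul (c : ℂ) (f : M2) (i j : ℕ) : co (c • f) i j = c * co f i j := by simp [co]

lemma co_zero (i j : ℕ) : co (0 : M2) i j = 0 := by simp [co]

lemma gevreyFn_zero {s : ℝ} : GevreyFn s fun _ _ => (0 : ℂ) :=
  ⟨1, 1, one_pos, one_pos, by intro i j; simp; positivity⟩

lemma gevreyFn_add {s : ℝ} {F G : ℕ → ℕ → ℂ} (hF : GevreyFn s F) (hG : GevreyFn s G) :
    GevreyFn s fun i j => F i j + G i j := by
  obtain ⟨C, R, hC, hR, h⟩ := hF
  obtain ⟨C', R', hC', hR', h'⟩ := hG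
  refine ⟨C + C', max R R', by positivity, lt_of_lt_of_le hR (le_max_left _ _), fun i j => ?_⟩
  have h1 := h i j
  have h2 := h' i j
  have hRm : R ^ (i + j) ≤ (max R R') ^ (i + j) := pow_le_pow_left₀ hR.le (le_max_left _ _) _
  have hRm' : R' ^ (i + j) ≤ (max R R') ^ (i + j) := pow_le_pow_left₀ hR'.le (le_max_right _ _) _
  have hfac : (0 : ℝ) ≤ (j.factorial : ℝ) ^ (s - 1) := by positivity
  calc ‖F i j + G i j‖ ≤ ‖F i j‖ + ‖G i j‖ :=
        norm_add_le _ _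
    _ ≤ C * R ^ (i + j) * (j.factorial : ℝ) ^ (s - 1)
        + C' * R' ^ (i + j) * (j.factorial : ℝ) ^ (s - 1) := add_le_add h1 h2
    _ ≤ C * (max R R') ^ (i + j) * (j.factorial : ℝ) ^ (s - 1)
        + C' * (max R R') ^ (i + j) * (j.factorial : ℝ) ^ (s - 1) := by gcongr
    _ = (C + C') * (max R R') ^ (i + j) * (j.factorial : ℝ) ^ (s - 1) := by ring

lemma gevreyFn_smul {s : ℝ} (c : ℂ) {F : ℕ → ℕ → ℂ} (hF : GevreyFn s F) :
    GevreyFn s fun i j => c * F i j := by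
  obtain ⟨C, R, hC, hR, h⟩ := hF
  refine ⟨(‖c‖ + 1) * C, R, by positivity, hR, fun i j => ?_⟩
  have h1 := h i j
  calc ‖c * F i j‖ = ‖c‖ * ‖F i j‖ := by simp [norm_mul]
    _ ≤ (‖c‖ + 1) * (C * R ^ (i + j) * (j.factorial : ℝ) ^ (s - 1)) := by
        apply mul_le_mul (by linarith) h1 (norm_nonneg _) (by positivity)
    _ = (‖c‖ + 1) * C * R ^ (i + j) * (j.factorial : ℝ) ^ (s - 1) := by ring

lemma gevreyFn_co_add {s : ℝ} {f g : M2} (hf : GevreyFn s (co f)) (hg : GevreyFn s (co g)) :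
    GevreyFn s (co (f + g)) := by
  have : co (f + g) = fun i j => co f i j + co g i j := by funext i j; exact co_add f g i j
  rw [this]; exact gevreyFn_add hf hg

lemma gevreyFn_co_smul {s : ℝ} (c : ℂ) {f : M2} (hf : GevreyFn s (co f)) :
    GevreyFn s (co (c • f)) := by
  have : co (c • f) = fun i j => c * co f i j := by funext i j; exact co_smul c f i j
  rw [this]; exact gevreyFn_smul c hf

lemma gevreyFn_co_zero {s : ℝ} : GevreyFn s (co (0 : M2)) := by
  have : co (0 : M2) = fun _ _ => (0 : ℂ) := by funext i j; exact co_zero i j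
  rw [this]; exact gevreyFn_zero

lemma pco_add (a b : ℕ) (f g : M2) (i j : ℕ) :
    Pco a b (f + g) i j = Pco a b f i j + Pco a b g i j := by
  simp only [Pco, co_add]; ring

lemma pco_smul (a b : ℕ) (c : ℂ) (f : M2) (i j : ℕ) :
    Pco a b (c • f) i j = c * Pco a b f i j := by
  simp only [Pco, co_smul]; ring

lemma pco_zero (a b : ℕ) (i j : ℕ) : Pco a b (0 : M2) i j = 0 := by
  simp [Pco, co_zero]

lemma eco_add (a b : ℕ) (β : ℂ) (f g : M2) (i j : ℕ) :
    Eco a b β (f + g) i j = Eco a b β f i j + Eco a b β g i j := by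
  simp only [Eco, co_add]; ring

lemma eco_smul (a b : ℕ) (β : ℂ) (c : ℂ) (f : M2) (i j : ℕ) :
    Eco a b β (c • f) i j = c * Eco a b β f i j := by
  simp only [Eco, co_smul]; ring

lemma eco_zero (a b : ℕ) (β : ℂ) (i j : ℕ) : Eco a b β (0 : M2) i j = 0 := by
  simp [Eco, co_zero]

lemma epco_add (a b : ℕ) (β ε : ℂ) (f g : M2) (i j : ℕ) :
    Epco a b β ε (f + g) i j = Epco a b β ε f i j + Epco a b β ε g i j := by
  simp only [Epco, co_add]; ring

lemma epco_smul (a b : ℕ) (β ε : ℂ) (c : ℂ) (f : M2) (i j : ℕ) :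
    Epco a b β ε (c • f) i j = c * Epco a b β ε f i j := by
  simp only [Epco, co_smul]; ring

lemma epco_zero (a b : ℕ) (β ε : ℂ) (i j : ℕ) : Epco a b β ε (0 : M2) i j = 0 := by
  simp [Epco, co_zero]

/-- The space of formal power series solutions of the hypergeometric system at `p = (ε,0)`,
`ε ≠ 0`: series `f ∈ ℂ[[t₁,x₂]]` with `P f = 0` and `E_p f = 0`. -/
def SolP (a b : ℕ) (β ε : ℂ) : Submodule ℂ M2 where
  carrier := {f | (∀ i j : ℕ, Pco a b f i j = 0) ∧ ∀ i j : ℕ, Epco a b β ε f i j = 0}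
  add_mem' := by
    rintro f g ⟨hf1, hf2⟩ ⟨hg1, hg2⟩
    exact ⟨fun i j => by rw [pco_add, hf1 i j, hg1 i j, add_zero],
      fun i j => by rw [epco_add, hf2 i j, hg2 i j, add_zero]⟩
  zero_mem' := ⟨fun i j => pco_zero a b i j, fun i j => epco_zero a b β ε i j⟩
  smul_mem' := by
    rintro c f ⟨hf1, hf2⟩
    exact ⟨fun i j => by rw [pco_smul, hf1 i j, mul_zero],
      fun i j => by rw [epco_smul, hf2 i j, mul_zero]⟩

namespace HGaux

def q (a b : ℕ) (β : ℂ) (i j : ℕ) : ℂ :=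
  ∏ k ∈ Finset.range i, (((a * k + b * j : ℕ) : ℂ) - β)

def cc (a b : ℕ) (β ε : ℂ) (i j : ℕ) : ℂ :=
  (-1)^i * q a b β i j / ((a:ℂ)^i * ε^i * (i.factorial : ℂ))

lemma q_succ (a b : ℕ) (β : ℂ) (i j : ℕ) :
    q a b β (i+1) j = q a b β i j * (((a * i + b * j : ℕ) : ℂ) - β) :=
  Finset.prod_range_succ _ _

lemma q_add (a b : ℕ) (β : ℂ) (i j : ℕ) :
    q a b β (i+b) j = q a b β b j * q a b β i (j+a) := by
  rw [q, add_comm i b, Finset.prod_range_add]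
  congr 1
  apply Finset.prod_congr rfl
  intro k _
  congr 2
  ring

lemma cc_zero (a b : ℕ) (β ε : ℂ) (j : ℕ) : cc a b β ε 0 j = 1 := by
  simp [cc, q]

lemma cc_rec (a b : ℕ) (β ε : ℂ) (i j : ℕ) (ha : (a:ℂ) ≠ 0) (hε : ε ≠ 0) :
    (((a * i + b * j : ℕ) : ℂ) - β) * cc a b β ε i j
      + (a : ℂ) * ε * ((i : ℂ) + 1) * cc a b β ε (i+1) j = 0 := by
  have hf : ((i.factorial : ℂ)) ≠ 0 := Nat.cast_ne_zero.mpr i.factorial_ne_zero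
  have hf' : (((i+1).factorial : ℂ)) ≠ 0 := Nat.cast_ne_zero.mpr (i+1).factorial_ne_zero
  rw [cc, cc, q_succ]
  have hfact : (((i+1).factorial : ℂ)) = ((i:ℂ)+1) * (i.factorial : ℂ) := by
    rw [Nat.factorial_succ]; push_cast; ring
  rw [hfact]
  have hi1 : ((i:ℂ)+1) ≠ 0 := by
    have := Nat.cast_ne_zero (R := ℂ).mpr (Nat.succ_ne_zero i)
    push_cast at this; exact this
  field_simp
  ring

lemma cc_key (a b : ℕ) (β ε : ℂ) (i j : ℕ) (ha : (a:ℂ) ≠ 0) (hε : ε ≠ 0) :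
    ((i+b).factorial : ℂ) / (i.factorial : ℂ) * cc a b β ε (i+b) j
      = (b.factorial : ℂ) * cc a b β ε i (j+a) * cc a b β ε b j := by
  have h1 : ((i.factorial : ℂ)) ≠ 0 := Nat.cast_ne_zero.mpr i.factorial_ne_zero
  have h2 : (((i+b).factorial : ℂ)) ≠ 0 := Nat.cast_ne_zero.mpr (i+b).factorial_ne_zero
  have h3 : ((b.factorial : ℂ)) ≠ 0 := Nat.cast_ne_zero.mpr b.factorial_ne_zero
  have hD1 : (i.factorial:ℂ) * ((a:ℂ)^(i+b) * ε^(i+b) * (((i+b).factorial:ℕ):ℂ)) ≠ 0 :=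
    mul_ne_zero h1 (mul_ne_zero (mul_ne_zero (pow_ne_zero _ ha) (pow_ne_zero _ hε)) h2)
  have hD2 : ((a:ℂ)^i * ε^i * (i.factorial:ℂ)) * ((a:ℂ)^b * ε^b * (b.factorial:ℂ)) ≠ 0 :=
    mul_ne_zero (mul_ne_zero (mul_ne_zero (pow_ne_zero _ ha) (pow_ne_zero _ hε)) h1)
      (mul_ne_zero (mul_ne_zero (pow_ne_zero _ ha) (pow_ne_zero _ hε)) h3)
  rw [cc, cc, cc, q_add, div_mul_div_comm, div_eq_iff hD1]
  field_simp
  ring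

def gSeq (a b : ℕ) (β ε : ℂ) (v : Fin a → ℂ) : ℕ → ℂ
  | j =>
    if h : j < a then v ⟨j, h⟩
    else if ha : a = 0 then 0
    else ((j - a).factorial : ℂ) / (j.factorial : ℂ) * (b.factorial : ℂ)
        * cc a b β ε b (j - a) * gSeq a b β ε v (j - a)
termination_by j => j
decreasing_by omega

lemma gSeq_lt (a b : ℕ) (β ε : ℂ) (v : Fin a → ℂ) {j : ℕ} (h : j < a) :
    gSeq a b β ε v j = v ⟨j, h⟩ := by rw [gSeq]; simp [h]

lemma gSeq_add (a b : ℕ) (β ε : ℂ) (v : Fin a → ℂ) (ha : a ≠ 0) (j : ℕ) :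
    gSeq a b β ε v (j + a) = (j.factorial : ℂ) / ((j + a).factorial : ℂ)
      * (b.factorial : ℂ) * cc a b β ε b j * gSeq a b β ε v j := by
  rw [gSeq]
  have h1 : ¬ (j + a < a) := by omega
  have h2 : j + a - a = j := by omega
  simp [h1, ha, h2]

lemma gSeq_rel (a b : ℕ) (β ε : ℂ) (v : Fin a → ℂ) (ha : a ≠ 0) (j : ℕ) :
    ((j + a).factorial : ℂ) * gSeq a b β ε v (j + a)
      = (j.factorial : ℂ) * (b.factorial : ℂ) * cc a b β ε b j * gSeq a b β ε v j := by
  have hja : (((j + a).factorial : ℂ)) ≠ 0 := Nat.cast_ne_zero.mpr (j + a).factorial_ne_zero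
  rw [gSeq_add a b β ε v ha j]
  field_simp

def Fc (a b : ℕ) (β ε : ℂ) (v : Fin a → ℂ) (i j : ℕ) : ℂ :=
  cc a b β ε i j * gSeq a b β ε v j

def solFn (a b : ℕ) (β ε : ℂ) (v : Fin a → ℂ) : M2 :=
  fun d => Fc a b β ε v (d 0) (d 1)

lemma co_solFn (a b : ℕ) (β ε : ℂ) (v : Fin a → ℂ) (i j : ℕ) :
    co (solFn a b β ε v) i j = Fc a b β ε v i j := by
  show solFn a b β ε v _ = _
  simp [solFn, Finsupp.single_apply]

lemma cc_key' (a b : ℕ) (β ε : ℂ) (i j : ℕ) (ha : (a:ℂ) ≠ 0) (hε : ε ≠ 0) :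
    ((i+b).factorial : ℂ) * cc a b β ε (i+b) j
      = (i.factorial : ℂ) * (b.factorial : ℂ) * cc a b β ε i (j+a) * cc a b β ε b j := by
  have h1 : ((i.factorial : ℂ)) ≠ 0 := Nat.cast_ne_zero.mpr i.factorial_ne_zero
  have key := cc_key a b β ε i j ha hε
  rw [div_mul_eq_mul_div, div_eq_iff h1] at key
  linear_combination key

lemma solFn_P (a b : ℕ) (β ε : ℂ) (v : Fin a → ℂ) (haN : a ≠ 0) (hε : ε ≠ 0) (i j : ℕ) :
    Pco a b (solFn a b β ε v) i j = 0 := by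
  have ha : ((a : ℂ)) ≠ 0 := Nat.cast_ne_zero.mpr haN
  have h1 : ((i.factorial : ℂ)) ≠ 0 := Nat.cast_ne_zero.mpr i.factorial_ne_zero
  have hj : ((j.factorial : ℂ)) ≠ 0 := Nat.cast_ne_zero.mpr j.factorial_ne_zero
  rw [Pco, co_solFn, co_solFn, Fc, Fc,
    Nat.cast_div (Nat.factorial_dvd_factorial (Nat.le_add_right i b)) h1,
    Nat.cast_div (Nat.factorial_dvd_factorial (Nat.le_add_right j a)) hj,
    sub_eq_zero, div_mul_eq_mul_div, div_mul_eq_mul_div, div_eq_div_iff h1 hj]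
  linear_combination ((j.factorial : ℂ) * gSeq a b β ε v j) * cc_key' a b β ε i j ha hε
    - ((i.factorial : ℂ) * cc a b β ε i (j+a)) * gSeq_rel a b β ε v haN j

lemma solFn_E (a b : ℕ) (β ε : ℂ) (v : Fin a → ℂ) (haN : a ≠ 0) (hε : ε ≠ 0) (i j : ℕ) :
    Epco a b β ε (solFn a b β ε v) i j = 0 := by
  have ha : ((a : ℂ)) ≠ 0 := Nat.cast_ne_zero.mpr haN
  rw [Epco, co_solFn, co_solFn, Fc, Fc]
  linear_combination (gSeq a b β ε v j) * cc_rec a b β ε i j ha hε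

lemma solFn_mem (a b : ℕ) (β ε : ℂ) (v : Fin a → ℂ) (haN : a ≠ 0) (hε : ε ≠ 0) :
    solFn a b β ε v ∈ SolP a b β ε :=
  ⟨fun i j => solFn_P a b β ε v haN hε i j, fun i j => solFn_E a b β ε v haN hε i j⟩

lemma vanish (a b : ℕ) (β ε : ℂ) (haN : a ≠ 0) (hε : ε ≠ 0) {f : M2}
    (hsol : f ∈ SolP a b β ε) (h0 : ∀ k, k < a → co f 0 k = 0) :
    ∀ i j : ℕ, co f i j = 0 := by
  have step : ∀ j, co f 0 j = 0 → ∀ i, co f i j = 0 := by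
    intro j h0j i
    induction i with
    | zero => exact h0j
    | succ n ih =>
      have hE := hsol.2 n j
      rw [Epco, ih, mul_zero, zero_add] at hE
      have hne : (a : ℂ) * ε * ((n : ℂ) + 1) ≠ 0 := by
        apply mul_ne_zero (mul_ne_zero (Nat.cast_ne_zero.mpr haN) hε)
        exact_mod_cast Nat.cast_add_one_ne_zero (R := ℂ) n
      exact (mul_eq_zero.mp hE).resolve_left hne
  have col0 : ∀ j, co f 0 j = 0 := by
    intro j
    induction j using Nat.strong_induction_on with
    | _ j ih =>
      by_cases h : j < a
      · exact h0 j h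
      · have hj : j - a + a = j := by omega
        have h0' : co f 0 (j - a) = 0 := ih _ (by omega)
        have hb : co f b (j - a) = 0 := step _ h0' b
        have hfac : ((((j - a) + a).factorial / (j - a).factorial : ℕ) : ℂ) ≠ 0 := by
          have hd : (j - a).factorial ∣ ((j - a) + a).factorial :=
            Nat.factorial_dvd_factorial (Nat.le_add_right _ _)
          have hpos : 0 < ((j - a) + a).factorial / (j - a).factorial :=
            Nat.div_pos (Nat.le_of_dvd (Nat.factorial_pos _) hd) (Nat.factorial_pos _)
          exact_mod_cast hpos.ne'
        have hP := hsol.1 0 (j - a)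
        rw [Pco, zero_add, hb, mul_zero, zero_sub, neg_eq_zero] at hP
        have := (mul_eq_zero.mp hP).resolve_left hfac
        rwa [hj] at this
  intro i j
  exact step j (col0 j) i

end HGaux

/-- The space of formal power series solutions of the hypergeometric system at the point
`p = (ε,0)` with `ε ≠ 0` has dimension `a`. -/
theorem dim_formal_solutions_at_p
    (a b : ℕ) (hab : Nat.Coprime a b) (ha : 0 < a) (haltb : a < b)
    (β : ℂ) (ε : ℂ) (hε : ε ≠ 0) :
    Module.rank ℂ (SolP a b β ε) = a := by
  have haN : a ≠ 0 := ha.ne'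
  let Φ : SolP a b β ε →ₗ[ℂ] (Fin a → ℂ) :=
    { toFun := fun f k => co f.1 0 k
      map_add' := by intro f g; funext k; exact co_add f.1 g.1 0 k
      map_smul' := by intro c f; funext k; exact co_smul c f.1 0 k }
  have hinj : Function.Injective Φ := by
    rw [injective_iff_map_eq_zero]
    intro f hf
    have h0 : ∀ k, k < a → co f.1 0 k = 0 := fun k hk => congrFun hf ⟨k, hk⟩
    have hvan := HGaux.vanish a b β ε haN hε f.2 h0
    have hz : (f : M2) = 0 := by
      ext d
      have h2 : d = Finsupp.single (0 : Fin 2) (d 0) + Finsupp.single (1 : Fin 2) (d 1) := by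
        ext x; fin_cases x <;> simp [Finsupp.single_apply]
      have hv := hvan (d 0) (d 1)
      rw [co, ← h2] at hv
      simpa using hv
    exact Subtype.ext hz
  have hsurj : Function.Surjective Φ := by
    intro v
    refine ⟨⟨HGaux.solFn a b β ε v, HGaux.solFn_mem a b β ε v haN hε⟩, ?_⟩
    funext k
    show co (HGaux.solFn a b β ε v) 0 (k : ℕ) = v k
    rw [HGaux.co_solFn, HGaux.Fc, HGaux.cc_zero, one_mul, HGaux.gSeq_lt a b β ε v k.isLt]
  have e : (SolP a b β ε) ≃ₗ[ℂ] (Fin a → ℂ) := LinearEquiv.ofBijective Φ ⟨hinj, hsurj⟩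
  rw [e.rank_eq]
  simp

end
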